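/- Let Λ : M_d(ℂ) → M_d(ℂ) be a linear map such that for every t ≥ 0 the map exp(tΛ) is trace-preserving and positive (maps positive semidefinite matrices to positive semidefinite matrices). Then every eigenvalue λ ∈ ℂ of Λ satisfies Re(λ) ≤ 0. -/

import Mathlib

open Matrix Filter
open scoped ComplexOrder

attribute [local instance] Matrix.frobeniusNormedAddCommGroup Matrix.frobeniusNormedSpace

-- exp applied to eigenvector
lemma exp_apply_eigen {E : Type*} [NormedAddCommGroup E] [NormedSpace ℂ E] [CompleteSpace E]
    (T : E →L[ℂ] E) (x : E) (μ : ℂ) (h : T x = μ • x) :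
    NormedSpace.exp T x = Complex.exp μ • x := by
  have hpow : ∀ n : ℕ, (T ^ n) x = μ ^ n • x := by
    intro n
    induction n with
    | zero => simp
    | succ n ih =>
      rw [pow_succ, pow_succ]
      simp [ContinuousLinearMap.mul_apply, ih, _root_.map_smul, h, smul_smul, mul_comm]
  have hsum : Summable fun n : ℕ => ((Nat.factorial n : ℂ))⁻¹ • T ^ n := NormedSpace.expSeries_summable' T
  have := (ContinuousLinearMap.apply ℂ E x).map_tsum hsum
  rw [NormedSpace.exp_eq_tsum ℂ]
  simp only [ContinuousLinearMap.apply_apply] at this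
  rw [this]
  simp only [ContinuousLinearMap.coe_smul', Pi.smul_apply, hpow, smul_smul]
  rw [Complex.exp_eq_exp_ℂ, NormedSpace.exp_eq_tsum ℂ]
  rw [← Summable.tsum_smul_const (NormedSpace.expSeries_summable' μ)]
  simp [smul_eq_mul]

variable {d : ℕ}

lemma quad_form (Q : Matrix (Fin d) (Fin d) ℂ) (i j : Fin d) (c : ℂ) :
    star (Pi.single i (1:ℂ) + c • (Pi.single j (1:ℂ) : Fin d → ℂ)) ⬝ᵥ
        Q *ᵥ (Pi.single i (1:ℂ) + c • (Pi.single j (1:ℂ) : Fin d → ℂ))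
      = Q i i + c * Q i j + (starRingEnd ℂ c) * Q j i + (starRingEnd ℂ c) * c * Q j j := by
  rw [star_add, star_smul, ← Pi.single_star, ← Pi.single_star, mulVec_add, mulVec_smul,
    Matrix.mulVec_single, Matrix.mulVec_single, add_dotProduct, smul_dotProduct]
  simp only [dotProduct_smul, single_dotProduct, MulOpposite.op_one, one_smul, Matrix.col_apply, star_one, one_mul, mul_one,
    smul_eq_mul, RCLike.star_def, Pi.add_apply, Pi.smul_apply]
  ring

lemma psd_diag {Q : Matrix (Fin d) (Fin d) ℂ} (hQ : Q.PosSemidef) (k : Fin d) :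
    0 ≤ Q k k := by
  have := hQ.dotProduct_mulVec_nonneg (Pi.single k 1)
  rw [← Pi.single_star, Matrix.mulVec_single, single_dotProduct] at this
  simpa using this

lemma psd_trace_re_nonneg {Q : Matrix (Fin d) (Fin d) ℂ} (hQ : Q.PosSemidef) :
    0 ≤ Q.trace.re := by
  rw [Matrix.trace, Complex.re_sum]
  exact Finset.sum_nonneg fun k _ => by simpa using (Complex.le_def.mp (psd_diag hQ k)).1

lemma psd_diag_le_trace {Q : Matrix (Fin d) (Fin d) ℂ} (hQ : Q.PosSemidef) (k : Fin d) :
    (Q k k).re ≤ Q.trace.re := by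
  rw [Matrix.trace, Complex.re_sum]
  exact Finset.single_le_sum (f := fun i => (Q.diag i).re)
    (fun i _ => by simpa using (Complex.le_def.mp (psd_diag hQ i)).1) (Finset.mem_univ k)

lemma psd_entry_abs_le {Q : Matrix (Fin d) (Fin d) ℂ} (hQ : Q.PosSemidef) (i j : Fin d) :
    ‖Q i j‖ ≤ Q.trace.re := by
  by_cases hij : i = j
  · subst hij
    have h0 := psd_diag hQ i
    have him : (Q i i).im = 0 := by simpa using (Complex.le_def.mp h0).2.symm
    have hre : 0 ≤ (Q i i).re := by simpa using (Complex.le_def.mp h0).1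
    have : ‖Q i i‖ = (Q i i).re := by
      rw [Complex.norm_def, Complex.normSq_apply, him]
      simp [Real.sqrt_mul_self hre]
    rw [this]
    exact psd_diag_le_trace hQ i
  by_cases h0 : Q i j = 0
  · simpa [h0] using psd_trace_re_nonneg hQ
  set a := Q i j with ha
  set c : ℂ := -(starRingEnd ℂ a) / ‖a‖ with hc
  have habs : (‖a‖ : ℝ) ≠ 0 := by simpa using h0
  have key := hQ.dotProduct_mulVec_nonneg (Pi.single i (1:ℂ) + c • (Pi.single j (1:ℂ) : Fin d → ℂ))
  rw [quad_form] at key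
  have hQji : Q j i = starRingEnd ℂ a := by
    rw [ha]
    have := congrFun (congrFun hQ.1 j) i
    simpa [Matrix.conjTranspose_apply] using this.symm
  have hca : c * a = -(‖a‖) := by
    rw [hc]
    field_simp
    rw [mul_comm, Complex.mul_conj]
    norm_cast
    rw [Complex.normSq_eq_norm_sq]
  have hcc : (starRingEnd ℂ c) * Q j i = -(‖a‖) := by
    rw [hQji, ← RingHom.map_mul, hca]
    simp
  have hc1 : (starRingEnd ℂ c) * c = 1 := by
    rw [hc]
    rw [map_div₀, map_neg, Complex.conj_conj, Complex.conj_ofReal]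
    field_simp
    rw [Complex.mul_conj]
    norm_cast
    rw [Complex.normSq_eq_norm_sq]
  rw [← ha, hca, hcc, hc1, one_mul] at key
  have hkey := (Complex.le_def.mp key).1
  simp only [Complex.add_re, Complex.neg_re, Complex.ofReal_re, Complex.zero_re] at hkey
  have hsum : (Q i i).re + (Q j j).re ≤ Q.trace.re := by
    rw [Matrix.trace, Complex.re_sum]
    have hle := Finset.sum_le_sum_of_subset_of_nonneg (f := fun k => (Q.diag k).re)
      (Finset.subset_univ ({i, j} : Finset (Fin d)))
      (fun k _ _ => by simpa using (Complex.le_def.mp (psd_diag hQ k)).1)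
    rw [Finset.sum_pair hij] at hle
    simpa using hle
  have habspos : 0 ≤ ‖a‖ := norm_nonneg a
  linarith

lemma psd_norm_le {Q : Matrix (Fin d) (Fin d) ℂ} (hQ : Q.PosSemidef) :
    ‖Q‖ ≤ d * Q.trace.re := by
  have htr := psd_trace_re_nonneg hQ
  have h2 : ∀ x : ℝ, x ^ (2:ℝ) = x ^ 2 := fun x => by
    rw [show (2:ℝ) = ((2:ℕ):ℝ) by norm_num, Real.rpow_natCast]
  rw [Matrix.frobenius_norm_def, ← Real.sqrt_eq_rpow]
  have hS : (∑ i, ∑ j, ‖Q i j‖ ^ (2:ℝ)) ≤ ((d:ℝ) * Q.trace.re) ^ 2 := by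
    calc (∑ i, ∑ j, ‖Q i j‖ ^ (2:ℝ))
        ≤ ∑ _i : Fin d, ∑ _j : Fin d, Q.trace.re ^ 2 := by
          refine Finset.sum_le_sum fun i _ => Finset.sum_le_sum fun j _ => ?_
          rw [h2]
          exact pow_le_pow_left₀ (norm_nonneg _)
            (by simpa using psd_entry_abs_le hQ i j) 2
      _ = (d:ℝ)^2 * Q.trace.re ^ 2 := by
          simp [Finset.sum_const, Finset.card_univ]; ring
      _ = ((d:ℝ) * Q.trace.re) ^ 2 := by ring
  calc Real.sqrt (∑ i, ∑ j, ‖Q i j‖ ^ (2:ℝ))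
      ≤ Real.sqrt (((d:ℝ) * Q.trace.re) ^ 2) := Real.sqrt_le_sqrt hS
    _ = (d:ℝ) * Q.trace.re := Real.sqrt_sq (by positivity)

lemma herm_decomp {H : Matrix (Fin d) (Fin d) ℂ} (hH : H.IsHermitian) :
    ∃ P N : Matrix (Fin d) (Fin d) ℂ, P.PosSemidef ∧ N.PosSemidef ∧ H = P - N := by
  classical
  set U := (hH.eigenvectorUnitary : Matrix (Fin d) (Fin d) ℂ)
  refine ⟨U * diagonal (fun i => ((max (hH.eigenvalues i) 0 : ℝ) : ℂ)) * Uᴴ,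
    U * diagonal (fun i => ((max (-hH.eigenvalues i) 0 : ℝ) : ℂ)) * Uᴴ, ?_, ?_, ?_⟩
  · exact (Matrix.posSemidef_diagonal_iff.mpr fun i => by
      rw [Complex.zero_le_real]; positivity).mul_mul_conjTranspose_same U
  · exact (Matrix.posSemidef_diagonal_iff.mpr fun i => by
      rw [Complex.zero_le_real]; positivity).mul_mul_conjTranspose_same U
  · have hspec := hH.spectral_theorem
    rw [← Matrix.sub_mul, ← Matrix.mul_sub, Matrix.diagonal_sub]
    have : (fun i => ((max (hH.eigenvalues i) 0 : ℝ) : ℂ) - ((max (-hH.eigenvalues i) 0 : ℝ) : ℂ))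
        = (fun i => ((hH.eigenvalues i : ℝ) : ℂ)) := by
      funext i
      rw [← Complex.ofReal_sub]
      norm_cast
      rcases le_or_gt 0 (hH.eigenvalues i) with h | h
      · rw [max_eq_left h, max_eq_right (by linarith)]; ring
      · rw [max_eq_right h.le, max_eq_left (by linarith)]; ring
    rw [this]
    simpa [Function.comp_def, Matrix.star_eq_conjTranspose] using hspec


/-- `exp (t Λ)` as a map on matrices. -/
noncomputable def expL {d : ℕ}
    (L : Matrix (Fin d) (Fin d) ℂ →ₗ[ℂ] Matrix (Fin d) (Fin d) ℂ) (t : ℝ) :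
    Matrix (Fin d) (Fin d) ℂ →L[ℂ] Matrix (Fin d) (Fin d) ℂ :=
  haveI : IsTopologicalRing (Matrix (Fin d) (Fin d) ℂ →L[ℂ] Matrix (Fin d) (Fin d) ℂ) :=
    @NonUnitalSeminormedRing.toIsTopologicalRing _ (@ContinuousLinearMap.toNormedRing ℂ
      (Matrix (Fin d) (Fin d) ℂ) Matrix.frobeniusNormedAddCommGroup _
      Matrix.frobeniusNormedSpace).toNonUnitalNormedRing.toNonUnitalSeminormedRing
  NormedSpace.exp ((t : ℂ) • LinearMap.toContinuousLinearMap L)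

theorem stmt16 (d : ℕ) (hd : 1 ≤ d)
    (Λ : Matrix (Fin d) (Fin d) ℂ →ₗ[ℂ] Matrix (Fin d) (Fin d) ℂ)
    (htrace : ∀ t : ℝ, 0 ≤ t → ∀ X : Matrix (Fin d) (Fin d) ℂ,
      (expL Λ t X).trace = X.trace)
    (hpos : ∀ t : ℝ, 0 ≤ t → ∀ A : Matrix (Fin d) (Fin d) ℂ,
      A.PosSemidef → (expL Λ t A).PosSemidef) :
    ∀ lam : ℂ, (∃ X : Matrix (Fin d) (Fin d) ℂ, X ≠ 0 ∧ Λ X = lam • X) → lam.re ≤ 0 := by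
  rintro lam ⟨X, hX0, hXeig⟩
  by_contra hcon
  push_neg at hcon
  -- Hermitian and anti-Hermitian parts
  set H : Matrix (Fin d) (Fin d) ℂ := (2⁻¹ : ℂ) • (X + Xᴴ) with hHdef
  set K : Matrix (Fin d) (Fin d) ℂ := (-(Complex.I) * 2⁻¹) • (X - Xᴴ) with hKdef
  have hHherm : H.IsHermitian := by
    rw [Matrix.IsHermitian, hHdef, Matrix.conjTranspose_smul, Matrix.conjTranspose_add,
      Matrix.conjTranspose_conjTranspose, add_comm Xᴴ X]
    congr 1
    simp
  have hKherm : K.IsHermitian := by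
    rw [Matrix.IsHermitian, hKdef, Matrix.conjTranspose_smul, Matrix.conjTranspose_sub,
      Matrix.conjTranspose_conjTranspose,
      show Xᴴ - X = -(X - Xᴴ) from (neg_sub _ _).symm, smul_neg, ← neg_smul]
    congr 1
    simp [Complex.star_def]
  have hXHK : X = H + Complex.I • K := by
    rw [hHdef, hKdef, smul_smul]
    rw [show Complex.I * (-(Complex.I) * 2⁻¹) = (2⁻¹ : ℂ) by
      rw [show Complex.I * (-(Complex.I) * 2⁻¹) = -(Complex.I * Complex.I) * 2⁻¹ by ring,
        Complex.I_mul_I]; norm_num]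
    rw [smul_add, smul_sub]
    module
  obtain ⟨P1, P2, hP1, hP2, hHPN⟩ := herm_decomp hHherm
  obtain ⟨P3, P4, hP3, hP4, hKPN⟩ := herm_decomp hKherm
  set C : ℝ := d * (P1.trace.re + P2.trace.re + P3.trace.re + P4.trace.re) with hCdef
  have hXnorm : 0 < ‖X‖ := norm_pos_iff.mpr hX0
  -- uniform bound
  have hbound : ∀ t : ℝ, 0 ≤ t → ‖expL Λ t X‖ ≤ C := by
    intro t ht
    have hXsplit : X = P1 - P2 + Complex.I • (P3 - P4) := by
      rw [hXHK, hHPN, hKPN]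
    have happ : expL Λ t X
        = expL Λ t P1 - expL Λ t P2 + Complex.I • (expL Λ t P3 - expL Λ t P4) := by
      conv_lhs => rw [hXsplit]
      simp [map_add, map_sub, _root_.map_smul]
    have hterm : ∀ P : Matrix (Fin d) (Fin d) ℂ, P.PosSemidef →
        ‖expL Λ t P‖ ≤ d * P.trace.re := by
      intro P hP
      have h1 := psd_norm_le (hpos t ht P hP)
      rwa [htrace t ht P] at h1
    rw [happ]
    calc ‖expL Λ t P1 - expL Λ t P2 + Complex.I • (expL Λ t P3 - expL Λ t P4)‖
        ≤ ‖expL Λ t P1 - expL Λ t P2‖ + ‖Complex.I • (expL Λ t P3 - expL Λ t P4)‖ :=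
          norm_add_le _ _
      _ ≤ (‖expL Λ t P1‖ + ‖expL Λ t P2‖) + (‖expL Λ t P3‖ + ‖expL Λ t P4‖) := by
          rw [norm_smul]
          simp only [Complex.norm_I, one_mul]
          exact add_le_add (norm_sub_le _ _) (norm_sub_le _ _)
      _ ≤ d * P1.trace.re + d * P2.trace.re + (d * P3.trace.re + d * P4.trace.re) := by
          gcongr <;> [exact hterm P1 hP1; exact hterm P2 hP2; exact hterm P3 hP3;
            exact hterm P4 hP4]
      _ = C := by rw [hCdef]; ring
  -- eigenvector evolution
  have heig : ∀ t : ℝ, expL Λ t X = Complex.exp ((t : ℂ) * lam) • X := by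
    intro t
    rw [expL]
    refine exp_apply_eigen _ X ((t : ℂ) * lam) ?_
    change (t : ℂ) • Λ X = _
    rw [hXeig, smul_smul]
  have hnorm : ∀ t : ℝ, ‖expL Λ t X‖ = Real.exp (t * lam.re) * ‖X‖ := by
    intro t
    rw [heig t, norm_smul, Complex.norm_exp]
    congr 2
    simp [Complex.mul_re]
  -- contradiction
  have hC0 : 0 ≤ C := le_trans (norm_nonneg _) (by simpa [hnorm 0] using hbound 0 le_rfl)
  set q : ℝ := C / ‖X‖ with hq
  have hq0 : 0 ≤ q := div_nonneg hC0 hXnorm.le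
  set t : ℝ := q / lam.re with ht
  have ht0 : 0 ≤ t := div_nonneg hq0 hcon.le
  have h1 := hbound t ht0
  rw [hnorm t] at h1
  have htq : t * lam.re = q := div_mul_cancel₀ q (ne_of_gt hcon)
  rw [htq] at h1
  have h2 : q + 1 ≤ Real.exp q := Real.add_one_le_exp q
  have h3 : (q + 1) * ‖X‖ ≤ C := le_trans (by nlinarith) h1
  have h4 : q * ‖X‖ = C := div_mul_cancel₀ C (ne_of_gt hXnorm)
  nlinarith
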